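/- Let r and d be integers with r ≥ 2 and d ≥ 2r−1, and let g be the genus of S_{r,d}. Then 8·ewt(S_{r,d}) ≤ (g+1)², i.e. ewt(S_{r,d}) ≤ ⌊(g+1)²/8⌋. Moreover, if g ≥ 10, then ewt(S_{r,d}) = ⌊(g+1)²/8⌋ if and only if there exists an integer η with −2 ≤ η ≤ 2 such that 2r = g + 1 + η and 4d = 5g + 1 + 3η. -/

import Mathlib

/-- The Castelnuovo semigroup `S_{r,d}`: the additive submonoid of ℕ generated by
the interval of integers `{d-r+1, …, d}`. -/
def castelnuovoSemigroup (r d : ℕ) : AddSubmonoid ℕ :=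
  AddSubmonoid.closure (Set.Icc (d - r + 1) d)

/-- A minimal generator of a numerical semigroup `S ⊆ ℕ`: a nonzero element of `S`
that cannot be written as a sum of two nonzero elements of `S`. -/
def IsMinimalGenerator (S : AddSubmonoid ℕ) (a : ℕ) : Prop :=
  a ∈ S ∧ a ≠ 0 ∧ ¬ ∃ x ∈ S, ∃ y ∈ S, x ≠ 0 ∧ y ≠ 0 ∧ a = x + y

/-- The effective weight of a numerical semigroup: the number of pairs `(b, a)` where
`b` is a gap of `S` and `a` is a minimal generator of `S` with `a < b`. -/
noncomputable def effectiveWeight (S : AddSubmonoid ℕ) : ℕ :=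
  {p : ℕ × ℕ | p.1 ∉ S ∧ IsMinimalGenerator S p.2 ∧ p.2 < p.1}.ncard


lemma mem_closure_of_between {a b n k : ℕ} (hab : a ≤ b) (h1 : k * a ≤ n) (h2 : n ≤ k * b) :
    n ∈ AddSubmonoid.closure (Set.Icc a b) := by
  induction k generalizing n with
  | zero =>
    have : n = 0 := by omega
    rw [this]; exact zero_mem _
  | succ k ih =>
    have ea : (k+1) * a = k * a + a := by ring
    have eb : (k+1) * b = k * b + b := by ring
    have hab' : k * a ≤ k * b := Nat.mul_le_mul_left k hab
    rcases le_total (n - k * a) b with hx | hx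
    · have hxa : a ≤ n - k * a := by omega
      have : n = (n - k * a) + k * a := by omega
      rw [this]
      exact add_mem (AddSubmonoid.subset_closure ⟨hxa, hx⟩) (ih le_rfl hab')
    · have hbn : k * a + b ≤ n := by omega
      have : n = b + (n - b) := by omega
      rw [this]
      exact add_mem (AddSubmonoid.subset_closure ⟨hab, le_rfl⟩) (ih (by omega) (by omega))

lemma mem_castelnuovo_iff {r d : ℕ} (hr : 2 ≤ r) (hd : 2 * r - 1 ≤ d) (n : ℕ) :
    n ∈ castelnuovoSemigroup r d ↔ ∃ k, k * (d - r + 1) ≤ n ∧ n ≤ k * d := by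
  constructor
  · intro h
    induction h using AddSubmonoid.closure_induction with
    | mem x hx => exact ⟨1, by simpa using hx.1, by simpa using hx.2⟩
    | zero => exact ⟨0, by simp⟩
    | add x y hx hy ihx ihy =>
      obtain ⟨k1, h1, h2⟩ := ihx
      obtain ⟨k2, h3, h4⟩ := ihy
      exact ⟨k1 + k2, by rw [add_mul]; omega, by rw [add_mul]; omega⟩
  · rintro ⟨k, h1, h2⟩
    exact mem_closure_of_between (by omega) h1 h2

lemma mem_castelnuovo_iff' {r d c : ℕ} (hr : 2 ≤ r) (hd : 2 * r - 1 ≤ d)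
    (hc : c = d - r + 1) (n : ℕ) :
    n ∈ castelnuovoSemigroup r d ↔ ∃ k, k * c ≤ n ∧ n ≤ k * d := by
  rw [hc]; exact mem_castelnuovo_iff hr hd n

lemma notmem_castelnuovo_iff {r d c : ℕ} (hr : 2 ≤ r) (hd : 2 * r - 1 ≤ d)
    (hc : c = d - r + 1) (n : ℕ) :
    n ∉ castelnuovoSemigroup r d ↔
      ∃ q, q < c ∧ q * d < n ∧ n < (q + 1) * c := by
  have hc1 : 1 ≤ c := by omega
  constructor
  · intro h
    have hn0 : n ≠ 0 := by rintro rfl; exact h (zero_mem _)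
    set q := n / c with hq
    have h1 : q * c + n % c = n := Nat.div_add_mod' n c
    have h2 : n % c < c := Nat.mod_lt n (by omega)
    have h3 : ¬ (n ≤ q * d) := by
      intro hle
      exact h ((mem_castelnuovo_iff' hr hd hc n).2 ⟨q, by omega, hle⟩)
    have h4 : q * d = q * c + q * (r - 1) := by
      have : d = c + (r - 1) := by omega
      rw [this]; ring
    have h5 : q ≤ q * (r - 1) := Nat.le_mul_of_pos_right q (by omega)
    have e1 : (q + 1) * c = q * c + c := by ring
    exact ⟨q, by omega, by omega, by omega⟩
  · rintro ⟨q, hqc, hq1, hq2⟩ hmem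
    obtain ⟨k, hk1, hk2⟩ := (mem_castelnuovo_iff' hr hd hc n).1 hmem
    rcases le_or_gt k q with hkq | hkq
    · have : k * d ≤ q * d := Nat.mul_le_mul_right d hkq
      omega
    · have h6 : (q + 1) * c ≤ k * c := Nat.mul_le_mul_right c hkq
      omega

def castGaps (r d c : ℕ) : Finset ℕ :=
  (Finset.range c).biUnion fun q => Finset.Ioo (q * d) ((q + 1) * c)

lemma compl_eq_gaps {r d c : ℕ} (hr : 2 ≤ r) (hd : 2 * r - 1 ≤ d) (hc : c = d - r + 1) :
    ((castelnuovoSemigroup r d : Set ℕ))ᶜ = ↑(castGaps r d c) := by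
  ext n
  simp only [Set.mem_compl_iff, SetLike.mem_coe, castGaps, Finset.coe_biUnion,
    Finset.mem_coe, Finset.mem_range, Set.mem_iUnion, Finset.mem_Ioo]
  rw [notmem_castelnuovo_iff hr hd hc]
  constructor
  · rintro ⟨q, h1, h2, h3⟩; exact ⟨q, h1, h2, h3⟩
  · rintro ⟨q, h1, h2, h3⟩; exact ⟨q, h1, h2, h3⟩

lemma gaps_card {r d c : ℕ} (hr : 2 ≤ r) (hd : 2 * r - 1 ≤ d) (hc : c = d - r + 1) :
    (castGaps r d c).card = ∑ q ∈ Finset.range c, ((c - 1) - q * (r - 1)) := by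
  rw [castGaps, Finset.card_biUnion]
  · refine Finset.sum_congr rfl fun q _ => ?_
    rw [Nat.card_Ioo]
    have h4 : q * d = q * c + q * (r - 1) := by
      have : d = c + (r - 1) := by omega
      rw [this]; ring
    have e1 : (q + 1) * c = q * c + c := by ring
    omega
  · intro q1 h1 q2 h2 hne
    simp only [Finset.mem_coe, Finset.mem_range] at h1 h2
    rw [Function.onFun, Finset.disjoint_left]
    intro n hn1 hn2
    simp only [Finset.mem_Ioo] at hn1 hn2
    have key : ∀ p1 p2 : ℕ, p1 < p2 → p2 < c → n < (p1 + 1) * c → p2 * d < n → False := by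
      intro p1 p2 hlt _ hna hnb
      have e2 : (p1 + 1) * c ≤ (p1 + 1) * d := Nat.mul_le_mul_left _ (by omega)
      have e3 : (p1 + 1) * d ≤ p2 * d := Nat.mul_le_mul_right _ (by omega)
      omega
    rcases lt_or_gt_of_ne hne with h | h
    · exact key q1 q2 h h2 hn1.2 hn2.1
    · exact key q2 q1 h h1 hn2.2 hn1.1

lemma gaps_card_closed {r d c K s : ℕ} (hr : 2 ≤ r) (hd : 2 * r - 1 ≤ d) (hc : c = d - r + 1)
    (hK : K = (d - 2) / (r - 1)) (hs : s = (d - 2) % (r - 1) + 1) :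
    2 * ((castGaps r d c).card : ℤ) = (K : ℤ) * (K - 1) * (r - 1) + 2 * K * s := by
  have hdm : (r - 1) * K + (s - 1) = d - 2 := by
    rw [hK, hs]; simpa using Nat.div_add_mod (d - 2) (r - 1)
  have hsm : s - 1 < r - 1 := by
    rw [hs]; simpa using Nat.mod_lt (d - 2) (show 0 < r - 1 by omega)
  have hs1 : 1 ≤ s := by omega
  have hK1 : 1 ≤ K := by
    by_contra hcon
    have hK0 : K = 0 := by omega
    rw [hK0, Nat.mul_zero] at hdm
    omega
  have hKc : K ≤ c := by
    by_contra hcon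
    have h1 : (r - 1) * (c + 1) ≤ (r - 1) * K := Nat.mul_le_mul_left _ (by omega)
    have h2 : (r - 1) * (c + 1) = (r - 1) * c + (r - 1) := by ring
    have h3 : c ≤ (r - 1) * c := Nat.le_mul_of_pos_left c (by omega)
    omega
  have hterm : ∀ q, q < K → q * (r - 1) ≤ c - 1 := by
    intro q hq
    have h1 : q * (r - 1) ≤ (K - 1) * (r - 1) := Nat.mul_le_mul_right _ (by omega)
    have h2 : (K - 1) * (r - 1) + (r - 1) = (r - 1) * K := by
      have hKK : K - 1 + 1 = K := by omega
      calc (K - 1) * (r - 1) + (r - 1) = (r - 1) * (K - 1 + 1) := by ring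
        _ = (r - 1) * K := by rw [hKK]
    omega
  rw [gaps_card hr hd hc]
  have hsplit : ∑ q ∈ Finset.range c, ((c - 1) - q * (r - 1))
      = ∑ q ∈ Finset.range K, ((c - 1) - q * (r - 1)) := by
    refine (Finset.sum_subset (Finset.range_subset_range.2 hKc) fun q _ hq => ?_).symm
    simp only [Finset.mem_range, not_lt] at hq
    have h1 : K * (r - 1) ≤ q * (r - 1) := Nat.mul_le_mul_right _ hq
    have h2 : K * (r - 1) = (r - 1) * K := by ring
    omega
  rw [hsplit]
  have hcast : (↑(∑ q ∈ Finset.range K, ((c - 1) - q * (r - 1))) : ℤ)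
      = ∑ q ∈ Finset.range K, (((c : ℤ) - 1) - q * ((r : ℤ) - 1)) := by
    rw [Nat.cast_sum]
    refine Finset.sum_congr rfl fun q hq => ?_
    have h1 := hterm q (Finset.mem_range.1 hq)
    have hc1 : 1 ≤ c := by omega
    rw [Nat.cast_sub h1, Nat.cast_mul, Nat.cast_sub hc1, Nat.cast_sub (by omega : 1 ≤ r)]
    push_cast
    ring
  rw [hcast]
  rw [Finset.sum_sub_distrib, Finset.sum_const, Finset.card_range, nsmul_eq_mul,
    ← Finset.sum_mul]
  have hgauss : (∑ q ∈ Finset.range K, (q : ℤ)) * 2 = (K : ℤ) * ((K : ℤ) - 1) := by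
    have h := Finset.sum_range_id_mul_two K
    have := congrArg (Nat.cast : ℕ → ℤ) h
    push_cast [Nat.cast_sub hK1] at this
    linarith [this]
  have hcrel : (c : ℤ) - 1 = ((r : ℤ) - 1) * ((K : ℤ) - 1) + s := by
    have hcast2 : ((r : ℤ) - 1) * K + ((s : ℤ) - 1) = (d : ℤ) - 2 := by
      have := congrArg (Nat.cast : ℕ → ℤ) hdm
      push_cast [Nat.cast_sub (by omega : 1 ≤ r), Nat.cast_sub hs1,
        Nat.cast_sub (by omega : 2 ≤ d)] at this
      linarith
    have hcc : (c : ℤ) = (d : ℤ) - r + 1 := by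
      have : c + r = d + 1 := by omega
      have := congrArg (Nat.cast : ℕ → ℤ) this
      push_cast at this
      linarith
    linarith [hcast2, hcc]
  linear_combination (2 * (K : ℤ)) * hcrel - ((r : ℤ) - 1) * hgauss

lemma min_elt {r d c n : ℕ} (hr : 2 ≤ r) (hd : 2 * r - 1 ≤ d) (hc : c = d - r + 1)
    (hmem : n ∈ castelnuovoSemigroup r d) (hn : n ≠ 0) : c ≤ n := by
  obtain ⟨k, h1, h2⟩ := (mem_castelnuovo_iff' hr hd hc n).1 hmem
  rcases Nat.eq_zero_or_pos k with rfl | hk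
  · omega
  · have : 1 * c ≤ k * c := Nat.mul_le_mul_right c hk
    omega

lemma isMinGen_iff {r d c : ℕ} (hr : 2 ≤ r) (hd : 2 * r - 1 ≤ d) (hc : c = d - r + 1)
    (n : ℕ) : IsMinimalGenerator (castelnuovoSemigroup r d) n ↔ c ≤ n ∧ n ≤ d := by
  constructor
  · rintro ⟨hmem, hn0, hnot⟩
    refine ⟨min_elt hr hd hc hmem hn0, ?_⟩
    by_contra hnd
    push_neg at hnd
    obtain ⟨k, h1, h2⟩ := (mem_castelnuovo_iff' hr hd hc n).1 hmem
    have hk2 : 2 ≤ k := by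
      rcases Nat.lt_or_ge k 2 with h | h
      · interval_cases k <;> omega
      · exact h
    have ekc : k * c = (k - 1) * c + c := by
      have : k - 1 + 1 = k := by omega
      calc k * c = (k - 1 + 1) * c := by rw [this]
        _ = (k - 1) * c + c := by ring
    have ekd : k * d = (k - 1) * d + d := by
      have : k - 1 + 1 = k := by omega
      calc k * d = (k - 1 + 1) * d := by rw [this]
        _ = (k - 1) * d + d := by ring
    have ecd : (k - 1) * c ≤ (k - 1) * d := Nat.mul_le_mul_left _ (by omega)
    -- decompose n = x + y with x ∈ [c,d], y ∈ [(k-1)c,(k-1)d]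
    have hdecomp : ∃ x y, c ≤ x ∧ x ≤ d ∧ (k - 1) * c ≤ y ∧ y ≤ (k - 1) * d ∧ n = x + y := by
      rcases le_total d (n - (k - 1) * c) with hx | hx
      · exact ⟨d, n - d, by omega, le_rfl, by omega, by omega, by omega⟩
      · exact ⟨n - (k - 1) * c, (k - 1) * c, by omega, hx, le_rfl, ecd, by omega⟩
    obtain ⟨x, y, hx1, hx2, hy1, hy2, hxy⟩ := hdecomp
    refine hnot ⟨x, ?_, y, ?_, by omega, ?_, hxy⟩
    · exact (mem_castelnuovo_iff' hr hd hc x).2 ⟨1, by omega, by omega⟩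
    · exact (mem_castelnuovo_iff' hr hd hc y).2 ⟨k - 1, hy1, hy2⟩
    · have : 1 * c ≤ (k - 1) * c := Nat.mul_le_mul_right c (by omega)
      omega
  · rintro ⟨h1, h2⟩
    refine ⟨(mem_castelnuovo_iff' hr hd hc n).2 ⟨1, by omega, by omega⟩, by omega, ?_⟩
    rintro ⟨x, hx, y, hy, hx0, hy0, rfl⟩
    have := min_elt hr hd hc hx hx0
    have := min_elt hr hd hc hy hy0
    omega

lemma gap_lt_or_gt {r d c b : ℕ} (hr : 2 ≤ r) (hd : 2 * r - 1 ≤ d) (hc : c = d - r + 1)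
    (hb : b ∈ castGaps r d c) : b < c ∨ d < b := by
  simp only [castGaps, Finset.mem_biUnion, Finset.mem_range, Finset.mem_Ioo] at hb
  obtain ⟨q, hq, h1, h2⟩ := hb
  rcases Nat.eq_zero_or_pos q with rfl | hq1
  · left; omega
  · right
    have : 1 * d ≤ q * d := Nat.mul_le_mul_right d hq1
    omega

lemma low_gaps {r d c : ℕ} (hr : 2 ≤ r) (hd : 2 * r - 1 ≤ d) (hc : c = d - r + 1) :
    (castGaps r d c).filter (fun b => ¬ d < b) = Finset.Ioo 0 c := by
  ext b
  simp only [Finset.mem_filter, Finset.mem_Ioo, not_lt]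
  constructor
  · rintro ⟨hb, hbd⟩
    rcases gap_lt_or_gt hr hd hc hb with h | h
    · constructor
      · simp only [castGaps, Finset.mem_biUnion, Finset.mem_range, Finset.mem_Ioo] at hb
        obtain ⟨q, hq, h1, h2⟩ := hb
        omega
      · exact h
    · omega
  · rintro ⟨h1, h2⟩
    refine ⟨?_, by omega⟩
    simp only [castGaps, Finset.mem_biUnion, Finset.mem_range, Finset.mem_Ioo]
    exact ⟨0, by omega, by omega, by omega⟩

lemma gaps_card_split {r d c : ℕ} (hr : 2 ≤ r) (hd : 2 * r - 1 ≤ d) (hc : c = d - r + 1) :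
    (castGaps r d c).card = ((castGaps r d c).filter (fun b => d < b)).card + (c - 1) := by
  have h := Finset.card_filter_add_card_filter_not
    (s := castGaps r d c) (p := fun b => d < b)
  rw [low_gaps hr hd hc, Nat.card_Ioo] at h
  omega

lemma ewt_eq {r d c : ℕ} (hr : 2 ≤ r) (hd : 2 * r - 1 ≤ d) (hc : c = d - r + 1) :
    effectiveWeight (castelnuovoSemigroup r d)
      = ((castGaps r d c).filter (fun b => d < b)).card * r := by
  have hcompl : ∀ n, n ∉ castelnuovoSemigroup r d ↔ n ∈ castGaps r d c := by
    intro n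
    rw [notmem_castelnuovo_iff hr hd hc]
    simp only [castGaps, Finset.mem_biUnion, Finset.mem_range, Finset.mem_Ioo]
  have hset : {p : ℕ × ℕ | p.1 ∉ castelnuovoSemigroup r d ∧
      IsMinimalGenerator (castelnuovoSemigroup r d) p.2 ∧ p.2 < p.1}
      = ↑(((castGaps r d c) ×ˢ Finset.Icc c d).filter fun p => p.2 < p.1) := by
    ext ⟨b, a⟩
    simp only [Set.mem_setOf_eq, Finset.coe_filter, Finset.mem_product, Finset.mem_Icc,
      Set.mem_setOf_eq]
    rw [hcompl, isMinGen_iff hr hd hc]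
    tauto
  rw [effectiveWeight, hset, Set.ncard_coe_finset]
  rw [Finset.card_eq_sum_card_fiberwise
    (f := Prod.fst) (t := castGaps r d c)
    (fun p hp => by simp only [Finset.mem_coe, Finset.mem_filter, Finset.mem_product] at hp; exact hp.1.1)]
  have hfiber : ∀ b ∈ castGaps r d c,
      ((((castGaps r d c) ×ˢ Finset.Icc c d).filter fun p => p.2 < p.1).filter
        fun p => p.1 = b).card = ((Finset.Icc c d).filter fun a => a < b).card := by
    intro b hb
    rw [show ((((castGaps r d c) ×ˢ Finset.Icc c d).filter fun p => p.2 < p.1).filter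
        fun p => p.1 = b) = {b} ×ˢ ((Finset.Icc c d).filter fun a => a < b) from ?_]
    · rw [Finset.card_product, Finset.card_singleton, one_mul]
    · ext ⟨b', a⟩
      simp only [Finset.mem_filter, Finset.mem_product, Finset.mem_singleton, Finset.mem_Icc]
      constructor
      · rintro ⟨⟨⟨h1, h2⟩, h3⟩, rfl⟩; exact ⟨rfl, h2, h3⟩
      · rintro ⟨rfl, h2, h3⟩; exact ⟨⟨⟨hb, h2⟩, h3⟩, rfl⟩
  rw [Finset.sum_congr rfl hfiber]
  rw [← Finset.sum_filter_add_sum_filter_not (castGaps r d c) (fun b => d < b)]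
  have hhigh : ∀ b ∈ (castGaps r d c).filter (fun b => d < b),
      ((Finset.Icc c d).filter fun a => a < b).card = r := by
    intro b hb
    simp only [Finset.mem_filter] at hb
    rw [Finset.filter_true_of_mem (fun a ha => by
      simp only [Finset.mem_Icc] at ha; omega)]
    rw [Nat.card_Icc]
    omega
  have hlow : ∀ b ∈ (castGaps r d c).filter (fun b => ¬ d < b),
      ((Finset.Icc c d).filter fun a => a < b).card = 0 := by
    intro b hb
    simp only [Finset.mem_filter] at hb
    have := gap_lt_or_gt hr hd hc hb.1
    rw [Finset.card_eq_zero, Finset.filter_eq_empty_iff]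
    intro a ha
    simp only [Finset.mem_Icc] at ha
    omega
  rw [Finset.sum_congr rfl hhigh, Finset.sum_congr rfl hlow]
  simp [Finset.sum_const, mul_comm]

theorem arithMain (u a s g h : ℤ) (hu : 0 ≤ u) (ha : 1 ≤ a) (hs1 : 1 ≤ s) (hs2 : s ≤ a)
    (hg : 2*g = u*(u+1)*a + 2*(u+1)*s) (hh : 2*h = u*(u-1)*a + 2*u*s) :
    8*(a+1)*h ≤ (g+1)^2 := by
  rcases eq_or_lt_of_le hu with h0 | hu1
  · subst h0; ring_nf at hg hh
    have : h = 0 := by linarith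
    nlinarith [sq_nonneg (g+1)]
  rcases eq_or_lt_of_le (by linarith : (1:ℤ) ≤ u) with h1 | hu2
  · rw [← h1] at hg hh; ring_nf at hg hh
    have hhs : h = s := by linarith
    have hgs : g = a + 2*s := by linarith
    nlinarith [sq_nonneg (a + 1 - 2*s)]
  have hu' : 2 ≤ u := hu2
  have h0 : 0 ≤ h := by nlinarith [mul_nonneg (mul_nonneg (by linarith : (0:ℤ) ≤ u) (by linarith : (0:ℤ) ≤ u - 1)) (by linarith : (0:ℤ) ≤ a), mul_nonneg (by linarith : (0:ℤ) ≤ u) (by linarith : (0:ℤ) ≤ s)]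
  have g0 : 0 ≤ g := by nlinarith [mul_nonneg (mul_nonneg (by linarith : (0:ℤ) ≤ u) (by linarith : (0:ℤ) ≤ u + 1)) (by linarith : (0:ℤ) ≤ a), mul_nonneg (by linarith : (0:ℤ) ≤ u + 1) (by linarith : (0:ℤ) ≤ s)]
  have hkey : 2*(a+1) + h ≤ g + 1 := by
    nlinarith [mul_nonneg (by linarith : (0:ℤ) ≤ u - 2) (by linarith : (0:ℤ) ≤ a)]
  nlinarith [sq_nonneg (2*(a+1) - h), mul_nonneg (sub_nonneg.2 hkey)
    (by linarith : (0:ℤ) ≤ g + 1 + (2*(a+1) + h))]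

-- strict version for the equality analysis: if u ≠ 1 and g ≥ 10 then gap ≥ 8
theorem arithStrict (u a s g h : ℤ) (hu : 0 ≤ u) (ha : 1 ≤ a) (hs1 : 1 ≤ s) (hs2 : s ≤ a)
    (hg : 2*g = u*(u+1)*a + 2*(u+1)*s) (hh : 2*h = u*(u-1)*a + 2*u*s)
    (hu1 : u ≠ 1) (hg10 : 10 ≤ g) :
    8*(a+1)*h + 8 ≤ (g+1)^2 := by
  rcases eq_or_lt_of_le hu with h0 | hu1'
  · subst h0; ring_nf at hg hh
    have : h = 0 := by linarith
    nlinarith [sq_nonneg (g+1)]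
  have hu' : 2 ≤ u := by rcases eq_or_lt_of_le (by linarith : (1:ℤ) ≤ u) with h1 | h2
                         · exact absurd h1.symm hu1
                         · exact h2
  have h0 : 0 ≤ h := by nlinarith [mul_nonneg (mul_nonneg (by linarith : (0:ℤ) ≤ u) (by linarith : (0:ℤ) ≤ u - 1)) (by linarith : (0:ℤ) ≤ a), mul_nonneg (by linarith : (0:ℤ) ≤ u) (by linarith : (0:ℤ) ≤ s)]
  have hkey : 2*(a+1) + h ≤ g + 1 := by
    nlinarith [mul_nonneg (by linarith : (0:ℤ) ≤ u - 2) (by linarith : (0:ℤ) ≤ a)]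
  rcases eq_or_lt_of_le hkey with heq | hlt
  · -- equality: (u-2)*a = 0 and s = 1, so u = 2, s = 1, h = a + 2, g = 3a+3 ≥ 10 so a ≥ 3
    have e1 : (u-2)*a + (s-1) = 0 := by nlinarith
    have e2 : (u-2)*a = 0 ∧ s = 1 := by
      constructor
      · nlinarith [mul_nonneg (by linarith : (0:ℤ) ≤ u - 2) (by linarith : (0:ℤ) ≤ a)]
      · nlinarith [mul_nonneg (by linarith : (0:ℤ) ≤ u - 2) (by linarith : (0:ℤ) ≤ a)]
    have hu2 : u = 2 := by
      rcases mul_eq_zero.1 e2.1 with h | h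
      · linarith
      · linarith
    have hs : s = 1 := e2.2
    subst hu2 hs
    have hha : h = a + 2 := by linarith
    have hga : g = 3*a + 3 := by linarith
    have ha3 : 3 ≤ a := by linarith
    nlinarith
  · nlinarith [sq_nonneg (2*(a+1) - h), mul_nonneg (by linarith : (0:ℤ) ≤ g + 1 - (2*(a+1) + h))
      (by linarith : (0:ℤ) ≤ g + 1 + (2*(a+1) + h))]


lemma sq_le_seven {x : ℤ} (h : x ^ 2 ≤ 7) : -2 ≤ x ∧ x ≤ 2 := by
  constructor <;> nlinarith

lemma sq_le_four {x : ℤ} (h1 : -2 ≤ x) (h2 : x ≤ 2) : x ^ 2 ≤ 4 := by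
  nlinarith

set_option maxHeartbeats 1000000 in
theorem castelnuovo_max_ewt (r d : ℕ) (hr : 2 ≤ r) (hd : 2 * r - 1 ≤ d)
    (g : ℕ) (hg : g = ((castelnuovoSemigroup r d : Set ℕ)ᶜ).ncard) :
    8 * effectiveWeight (castelnuovoSemigroup r d) ≤ (g + 1) ^ 2 ∧
    (10 ≤ g →
      (effectiveWeight (castelnuovoSemigroup r d) = (g + 1) ^ 2 / 8 ↔
        ∃ η : ℤ, -2 ≤ η ∧ η ≤ 2 ∧ (2 * r : ℤ) = (g : ℤ) + 1 + η ∧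
          (4 * d : ℤ) = 5 * (g : ℤ) + 1 + 3 * η)) := by
  obtain ⟨c, hc⟩ : ∃ c, c = d - r + 1 := ⟨_, rfl⟩
  obtain ⟨K, hK⟩ : ∃ K, K = (d - 2) / (r - 1) := ⟨_, rfl⟩
  obtain ⟨s, hs⟩ : ∃ s, s = (d - 2) % (r - 1) + 1 := ⟨_, rfl⟩
  obtain ⟨hi, hhi⟩ : ∃ hi, hi = ((castGaps r d c).filter (fun b => d < b)).card := ⟨_, rfl⟩
  have hgenus : g = (castGaps r d c).card := by
    rw [hg, compl_eq_gaps hr hd hc, Set.ncard_coe_finset]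
  have h2g := gaps_card_closed hr hd hc hK hs
  have hsplit : g = hi + (c - 1) := by
    rw [hgenus, hhi]; exact gaps_card_split hr hd hc
  have hewt : effectiveWeight (castelnuovoSemigroup r d) = hi * r := by
    rw [hhi]; exact ewt_eq hr hd hc
  have hdm : (r - 1) * K + (s - 1) = d - 2 := by
    rw [hK, hs]; simpa using Nat.div_add_mod (d - 2) (r - 1)
  have hsm : s - 1 < r - 1 := by
    rw [hs]; simpa using Nat.mod_lt (d - 2) (show 0 < r - 1 by omega)
  have hs1 : 1 ≤ s := by omega
  have hrK : (r - 1) * K ≤ d - 2 := by omega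
  have hK1 : 1 ≤ K := by
    rcases Nat.eq_zero_or_pos K with h0 | h0
    · rw [h0, Nat.mul_zero] at hdm; omega
    · exact h0
  -- integer abbreviations (opaque)
  obtain ⟨u, hu⟩ : ∃ u : ℤ, u = (K : ℤ) - 1 := ⟨_, rfl⟩
  obtain ⟨a, ha⟩ : ∃ a : ℤ, a = (r : ℤ) - 1 := ⟨_, rfl⟩
  obtain ⟨S, hS⟩ : ∃ S : ℤ, S = (s : ℤ) := ⟨_, rfl⟩
  obtain ⟨G, hG⟩ : ∃ G : ℤ, G = (g : ℤ) := ⟨_, rfl⟩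
  obtain ⟨H, hH⟩ : ∃ H : ℤ, H = (hi : ℤ) := ⟨_, rfl⟩
  have hu0 : 0 ≤ u := by
    have : (1 : ℤ) ≤ (K : ℤ) := by exact_mod_cast hK1
    linarith [hu]
  have ha1 : 1 ≤ a := by
    have : (2 : ℤ) ≤ (r : ℤ) := by exact_mod_cast hr
    linarith [ha]
  have hS1 : 1 ≤ S := by
    have : (1 : ℤ) ≤ (s : ℤ) := by exact_mod_cast hs1
    linarith [hS]
  have hSa : S ≤ a := by
    have h6 : s + 1 ≤ r := by omega
    have : (s : ℤ) + 1 ≤ (r : ℤ) := by exact_mod_cast h6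
    linarith [hS, ha]
  have hdmZ : a * (u + 1) + (S - 1) = (d : ℤ) - 2 := by
    have h7 := congrArg (Nat.cast : ℕ → ℤ) hdm
    push_cast [Nat.cast_sub (by omega : 1 ≤ r), Nat.cast_sub hs1,
      Nat.cast_sub (by omega : 2 ≤ d)] at h7
    rw [ha, hu, hS]
    push_cast
    linarith
  have hcc : (c : ℤ) = (d : ℤ) - r + 1 := by
    have h5 : c + r = d + 1 := by omega
    have h7 := congrArg (Nat.cast : ℕ → ℤ) h5
    push_cast at h7
    linarith
  have hcZ : (c : ℤ) - 1 = a * u + S := by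
    rw [ha, hu, hS]
    rw [ha, hu, hS] at hdmZ
    linarith
  have hg2 : 2 * G = u * (u + 1) * a + 2 * (u + 1) * S := by
    rw [hG, hgenus, hu, ha, hS]
    push_cast
    linear_combination h2g
  have hGH : G = H + (a * u + S) := by
    have h7 := congrArg (Nat.cast : ℕ → ℤ) hsplit
    push_cast [Nat.cast_sub (by omega : 1 ≤ c)] at h7
    rw [hG, hH]
    linarith [hcZ]
  have hh2 : 2 * H = u * (u - 1) * a + 2 * u * S := by
    linear_combination hg2 - 2 * hGH
  have hWZ : ((effectiveWeight (castelnuovoSemigroup r d)) : ℤ) = (a + 1) * H := by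
    rw [hewt, ha, hH]
    push_cast
    ring
  have hmain := arithMain u a S G H hu0 ha1 hS1 hSa hg2 hh2
  constructor
  · have h8 : ((8 * effectiveWeight (castelnuovoSemigroup r d) : ℕ) : ℤ)
        ≤ (((g + 1) ^ 2 : ℕ) : ℤ) := by
      push_cast
      rw [show ((effectiveWeight (castelnuovoSemigroup r d) : ℤ)) = (a + 1) * H from hWZ]
      have : ((g : ℤ) + 1) ^ 2 = (G + 1) ^ 2 := by rw [hG]
      rw [this]
      linarith [hmain]
    exact_mod_cast h8
  · intro hg10
    have hG10 : 10 ≤ G := by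
      have : (10 : ℤ) ≤ (g : ℤ) := by exact_mod_cast hg10
      linarith [hG]
    constructor
    · -- forward direction
      intro hEq
      obtain ⟨W, hW⟩ : ∃ W, W = effectiveWeight (castelnuovoSemigroup r d) := ⟨_, rfl⟩
      obtain ⟨X, hX⟩ : ∃ X, X = (g + 1) ^ 2 := ⟨_, rfl⟩
      have hb2 : X < 8 * W + 8 := by
      -- from W = X / 8
        have : W = X / 8 := by rw [hW, hX]; exact hEq
        omega
      have hXZ : (X : ℤ) = (G + 1) ^ 2 := by rw [hX, hG]; push_cast; ring
      have hgap : (G + 1) ^ 2 - 8 * ((a + 1) * H) ≤ 7 := by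
        have h1 : (X : ℤ) < 8 * (W : ℤ) + 8 := by exact_mod_cast hb2
        rw [hXZ, hW, hWZ] at h1
        linarith
      by_cases hu1 : u = 1
      · rw [hu1] at hg2 hh2
        have hGa : G = a + 2 * S := by linarith [hg2]
        have hHa : H = S := by linarith [hh2]
        have hsq : (a + 1 - 2 * S) ^ 2 ≤ 7 := by
          have hid : (G + 1) ^ 2 - 8 * ((a + 1) * H) = (a + 1 - 2 * S) ^ 2 := by
            rw [hGa, hHa]; ring
          linarith [hgap]
        have hηb : -2 ≤ a + 1 - 2 * S ∧ a + 1 - 2 * S ≤ 2 := sq_le_seven hsq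
        refine ⟨a + 1 - 2 * S, hηb.1, hηb.2, ?_, ?_⟩
        · have : (r : ℤ) = a + 1 := by rw [ha]; ring
          rw [this]
          rw [← hG]
          linarith [hGa]
        · have hdZ : (d : ℤ) = 2 * a + S + 1 := by
            rw [hu1] at hdmZ
            linarith [hdmZ]
          rw [hdZ, ← hG]
          linarith [hGa]
      · exfalso
        have := arithStrict u a S G H hu0 ha1 hS1 hSa hg2 hh2 hu1 hG10
        linarith [hgap]
    · -- backward direction
      rintro ⟨η, hη1, hη2, hηr, hηd⟩
      rw [← hG] at hηr hηd
      have hrZ : (r : ℤ) = a + 1 := by rw [ha]; ring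
      have hGdr : G = H + ((d : ℤ) - r) := by
        have : (c : ℤ) - 1 = (d : ℤ) - r := by linarith [hcc]
        linarith [hGH, hcZ, this]
      have h4H : 4 * H = G + 1 - η := by linarith [hGdr, hηr, hηd]
      have h8W : ((effectiveWeight (castelnuovoSemigroup r d)) : ℤ) * 8
          = (G + 1) ^ 2 - η ^ 2 := by
        rw [hWZ, ← hrZ]
        linear_combination (2 * (r : ℤ)) * h4H + (G + 1 - η) * hηr
      have hη4 : 0 ≤ η ^ 2 ∧ η ^ 2 ≤ 4 := ⟨sq_nonneg η, sq_le_four hη1 hη2⟩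
      obtain ⟨E, hE⟩ : ∃ E : ℕ, (E : ℤ) = η ^ 2 := ⟨(η ^ 2).toNat, Int.toNat_of_nonneg hη4.1⟩
      have hEℕ : (g + 1) ^ 2 = 8 * effectiveWeight (castelnuovoSemigroup r d) + E := by
        have h9 : (((g + 1) ^ 2 : ℕ) : ℤ)
            = 8 * ((effectiveWeight (castelnuovoSemigroup r d)) : ℤ) + (E : ℤ) := by
          rw [hE]
          have : ((g : ℤ) + 1) ^ 2 = (G + 1) ^ 2 := by rw [hG]
          push_cast
          rw [this]
          linarith [h8W]
        exact_mod_cast h9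
      have hE4 : E ≤ 4 := by
        have : (E : ℤ) ≤ 4 := by rw [hE]; exact hη4.2
        exact_mod_cast this
      obtain ⟨X, hX⟩ : ∃ X, X = (g + 1) ^ 2 := ⟨_, rfl⟩
      rw [← hX] at hEℕ ⊢
      omega
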